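/- Let $f : [0,\Delta t] \to \mathbb{R}$ be $(p+1)$-times continuously differentiable with $f^{(j)}(0) = 0$ for $j = 0,\dots,p-1$, and let $\widetilde{C} = \max_{\xi \in [0,\Delta t]} |f^{(p+1)}(\xi)|$. Then $\left| \int_0^{\Delta t} f(\tau)\,d\tau - \frac{\Delta t}{p+1} f(\Delta t) \right| \le \frac{2p+3}{(p+2)!(p+1)} \widetilde{C}\, \Delta t^{p+2}$. -/

import Mathlib

private lemma iDW_congr_set {f : ℝ → ℝ} {s t : Set ℝ} {x : ℝ} (h : s =ᶠ[nhds x] t) (n : ℕ) :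
    iteratedDerivWithin n f s x = iteratedDerivWithin n f t x := by
  simp only [iteratedDerivWithin_eq_iteratedFDerivWithin, iteratedFDerivWithin_congr_set h n]

private lemma iDW_inter {f : ℝ → ℝ} {s u : Set ℝ} {x : ℝ} (hu : u ∈ nhds x) (n : ℕ) :
    iteratedDerivWithin n f (s ∩ u) x = iteratedDerivWithin n f s x := by
  simp only [iteratedDerivWithin_eq_iteratedFDerivWithin, iteratedFDerivWithin_inter hu]

private lemma key_taylor_bound (p : ℕ) (Δt : ℝ) (hΔt : 0 < Δt) (f : ℝ → ℝ)
    (hf : ContDiffOn ℝ (p + 1) f (Set.Icc 0 Δt))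
    (hvanish : ∀ j < p, iteratedDerivWithin j f (Set.Icc 0 Δt) 0 = 0)
    (Ctil : ℝ)
    (hC : ∀ y ∈ Set.Icc (0:ℝ) Δt, |iteratedDerivWithin (p + 1) f (Set.Icc 0 Δt) y| ≤ Ctil) :
    ∀ τ ∈ Set.Icc (0:ℝ) Δt,
      |f τ - iteratedDerivWithin p f (Set.Icc 0 Δt) 0 * τ ^ p / (Nat.factorial p)| ≤
        Ctil * τ ^ (p + 1) / (Nat.factorial (p + 1)) := by
  intro τ hτ
  set K := iteratedDerivWithin p f (Set.Icc 0 Δt) 0 with hK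
  rcases eq_or_lt_of_le hτ.1 with h0 | h0
  · subst h0
    have hf0 : f 0 - K * (0:ℝ) ^ p / (Nat.factorial p) = 0 := by
      rcases Nat.eq_zero_or_pos p with rfl | hp
      · simp [hK, iteratedDerivWithin_zero]
      · have : f 0 = 0 := by
          have := hvanish 0 hp
          simpa [iteratedDerivWithin_zero] using this
        simp [this, zero_pow hp.ne']
    rw [hf0]
    simp [zero_pow (Nat.succ_ne_zero p)]
  · have hsub : Set.Icc (0:ℝ) τ ⊆ Set.Icc 0 Δt := Set.Icc_subset_Icc_right hτ.2
    have hfτ : ContDiffOn ℝ (p + 1) f (Set.Icc 0 τ) := hf.mono hsub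
    have hf' : DifferentiableOn ℝ (iteratedDerivWithin p f (Set.Icc 0 τ)) (Set.Ioo 0 τ) :=
      (hfτ.differentiableOn_iteratedDerivWithin (by exact_mod_cast p.lt_succ_self)
        (uniqueDiffOn_Icc h0)).mono Set.Ioo_subset_Icc_self
    obtain ⟨x', hx', heq⟩ := taylor_mean_remainder_lagrange (n := p) h0.ne
      (by rw [Set.uIcc_of_le h0.le]; exact hfτ.of_le (by exact_mod_cast p.le_succ))
      (by rw [Set.uIcc_of_le h0.le, Set.uIoo_of_le h0.le]; exact hf')
    rw [Set.uIcc_of_le h0.le] at heq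
    rw [Set.uIoo_of_le h0.le] at hx'
    have hset : Set.Icc (0:ℝ) τ = Set.Icc 0 Δt ∩ Set.Iic τ := by
      ext y; simp only [Set.mem_Icc, Set.mem_inter_iff, Set.mem_Iic]; constructor
      · rintro ⟨h1, h2⟩; exact ⟨⟨h1, h2.trans hτ.2⟩, h2⟩
      · rintro ⟨⟨h1, _⟩, h2⟩; exact ⟨h1, h2⟩
    have hcoeff : ∀ k : ℕ, iteratedDerivWithin k f (Set.Icc 0 τ) 0 =
        iteratedDerivWithin k f (Set.Icc 0 Δt) 0 := by
      intro k
      rw [hset, iDW_inter (Iic_mem_nhds h0) k]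
    have hpoly : taylorWithinEval f p (Set.Icc 0 τ) 0 τ = K * τ ^ p / (Nat.factorial p) := by
      rw [taylor_within_apply, Finset.sum_range_succ]
      have : ∀ k ∈ Finset.range p,
          (((Nat.factorial k : ℝ))⁻¹ * (τ - 0) ^ k) • iteratedDerivWithin k f (Set.Icc 0 τ) 0
            = 0 := by
        intro k hk
        rw [hcoeff k, hvanish k (Finset.mem_range.1 hk), smul_zero]
      rw [Finset.sum_eq_zero this, hcoeff p, zero_add, smul_eq_mul]
      ring
    have hx'mem : x' ∈ Set.Icc (0:ℝ) Δt := hsub (Set.Ioo_subset_Icc_self hx')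
    have hderiv : iteratedDerivWithin (p + 1) f (Set.Icc 0 τ) x' =
        iteratedDerivWithin (p + 1) f (Set.Icc 0 Δt) x' := by
      refine iDW_congr_set ?_ (p + 1)
      have hmem : Set.Ioo (0:ℝ) τ ∈ nhds x' := isOpen_Ioo.mem_nhds hx'
      rw [Filter.eventuallyEq_set]
      filter_upwards [hmem] with y hy
      simp only [Set.mem_Icc]
      constructor
      · rintro ⟨h1, h2⟩; exact ⟨h1, h2.trans hτ.2⟩
      · rintro ⟨h1, h2⟩; exact ⟨h1, hy.2.le⟩
    rw [hpoly, hderiv, sub_zero] at heq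
    rw [heq, abs_div, abs_mul, abs_pow, abs_of_nonneg hτ.1,
      abs_of_nonneg (by positivity : (0:ℝ) ≤ (Nat.factorial (p+1) : ℝ))]
    gcongr
    exact hC x' hx'mem

theorem stmt_2 (p : ℕ) (Δt : ℝ) (hΔt : 0 < Δt) (f : ℝ → ℝ)
    (hf : ContDiffOn ℝ (p + 1) f (Set.Icc 0 Δt))
    (hvanish : ∀ j < p, iteratedDerivWithin j f (Set.Icc 0 Δt) 0 = 0)
    (Ctil : ℝ)
    (hCtil : Ctil = sSup ((fun ξ => |iteratedDerivWithin (p + 1) f (Set.Icc 0 Δt) ξ|) ''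
      Set.Icc 0 Δt)) :
    |(∫ τ in (0 : ℝ)..Δt, f τ) - Δt / (p + 1) * f Δt| ≤
      (2 * p + 3) / (Nat.factorial (p + 2) * (p + 1)) * Ctil * Δt ^ (p + 2) := by
  have huniq : UniqueDiffOn ℝ (Set.Icc (0:ℝ) Δt) := uniqueDiffOn_Icc hΔt
  set K := iteratedDerivWithin p f (Set.Icc 0 Δt) 0 with hK
  have hcontD : ContinuousOn (fun ξ => |iteratedDerivWithin (p + 1) f (Set.Icc 0 Δt) ξ|)
      (Set.Icc 0 Δt) := (hf.continuousOn_iteratedDerivWithin rfl.le huniq).abs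
  have hC : ∀ y ∈ Set.Icc (0:ℝ) Δt, |iteratedDerivWithin (p + 1) f (Set.Icc 0 Δt) y| ≤ Ctil := by
    intro y hy
    rw [hCtil]
    exact hcontD.le_sSup_image_Icc hy
  have hC0 : 0 ≤ Ctil := le_trans (abs_nonneg _) (hC 0 ⟨le_refl _, hΔt.le⟩)
  have key := key_taylor_bound p Δt hΔt f hf hvanish Ctil hC
  rw [← hK] at key
  -- continuity and integrability
  have hfc : ContinuousOn f (Set.Icc 0 Δt) := hf.continuousOn
  have huIcc : Set.uIcc (0:ℝ) Δt = Set.Icc 0 Δt := Set.uIcc_of_le hΔt.le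
  have hint_f : IntervalIntegrable f MeasureTheory.volume 0 Δt := by
    apply ContinuousOn.intervalIntegrable; rwa [huIcc]
  have hint_poly : IntervalIntegrable (fun τ => K * τ ^ p / (Nat.factorial p))
      MeasureTheory.volume 0 Δt := by
    apply Continuous.intervalIntegrable; fun_prop
  have hint_g : IntervalIntegrable (fun τ => f τ - K * τ ^ p / (Nat.factorial p))
      MeasureTheory.volume 0 Δt := hint_f.sub hint_poly
  have hint_gabs : IntervalIntegrable (fun τ => |f τ - K * τ ^ p / (Nat.factorial p)|)
      MeasureTheory.volume 0 Δt := by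
    apply ContinuousOn.intervalIntegrable
    rw [huIcc]
    exact (hfc.sub (by fun_prop)).abs
  have hint_B : IntervalIntegrable (fun τ => Ctil * τ ^ (p + 1) / (Nat.factorial (p + 1)))
      MeasureTheory.volume 0 Δt := by
    apply Continuous.intervalIntegrable; fun_prop
  -- cast facts
  have hfacp : (0:ℝ) < (Nat.factorial p : ℝ) := by positivity
  have hp1 : (0:ℝ) < (p:ℝ) + 1 := by positivity
  -- compute the polynomial integral
  have hpolyint : (∫ τ in (0:ℝ)..Δt, K * τ ^ p / (Nat.factorial p)) =
      K * Δt ^ (p + 1) / (((p:ℝ) + 1) * (Nat.factorial p)) := by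
    have : (fun τ : ℝ => K * τ ^ p / (Nat.factorial p)) =
        fun τ : ℝ => (K / (Nat.factorial p)) * τ ^ p := by
      funext τ; ring
    rw [this, intervalIntegral.integral_const_mul, integral_pow]
    push_cast
    field_simp
    simp
  -- rewrite the LHS
  have hsplit : (∫ τ in (0:ℝ)..Δt, f τ) - Δt / (p + 1) * f Δt =
      (∫ τ in (0:ℝ)..Δt, (f τ - K * τ ^ p / (Nat.factorial p))) -
        Δt / (p + 1) * (f Δt - K * Δt ^ p / (Nat.factorial p)) := by
    rw [intervalIntegral.integral_sub hint_f hint_poly, hpolyint]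
    have hcancel : Δt / ((p:ℝ) + 1) * (K * Δt ^ p / (Nat.factorial p)) =
        K * Δt ^ (p + 1) / (((p:ℝ) + 1) * (Nat.factorial p)) := by
      field_simp
      ring
    ring_nf
    ring_nf at hcancel
    linarith [hcancel]
  rw [hsplit]
  have h1 : |∫ τ in (0:ℝ)..Δt, (f τ - K * τ ^ p / (Nat.factorial p))| ≤
      Ctil * Δt ^ (p + 2) / (Nat.factorial (p + 2)) := by
    calc |∫ τ in (0:ℝ)..Δt, (f τ - K * τ ^ p / (Nat.factorial p))|
        ≤ ∫ τ in (0:ℝ)..Δt, |f τ - K * τ ^ p / (Nat.factorial p)| :=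
          intervalIntegral.abs_integral_le_integral_abs hΔt.le
      _ ≤ ∫ τ in (0:ℝ)..Δt, Ctil * τ ^ (p + 1) / (Nat.factorial (p + 1)) := by
          apply intervalIntegral.integral_mono_on hΔt.le hint_gabs hint_B
          intro x hx
          exact key x hx
      _ = Ctil * Δt ^ (p + 2) / (Nat.factorial (p + 2)) := by
          have : (fun τ : ℝ => Ctil * τ ^ (p + 1) / (Nat.factorial (p + 1))) =
              fun τ : ℝ => (Ctil / (Nat.factorial (p + 1))) * τ ^ (p + 1) := by
            funext τ; ring
          rw [this, intervalIntegral.integral_const_mul, integral_pow]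
          have hfs : (Nat.factorial (p + 2) : ℝ) = ((p:ℝ) + 2) * (Nat.factorial (p + 1)) := by
            rw [Nat.factorial_succ]; push_cast; ring
          rw [hfs]
          have hf1 : (0:ℝ) < (Nat.factorial (p + 1) : ℝ) := by positivity
          push_cast
          field_simp
          simp
          exact Or.inl (by ring)
  have h2 : |Δt / ((p:ℝ) + 1) * (f Δt - K * Δt ^ p / (Nat.factorial p))| ≤
      Δt / ((p:ℝ) + 1) * (Ctil * Δt ^ (p + 1) / (Nat.factorial (p + 1))) := by
    rw [abs_mul, abs_of_nonneg (by positivity : (0:ℝ) ≤ Δt / ((p:ℝ) + 1))]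
    gcongr
    exact key Δt ⟨hΔt.le, le_refl _⟩
  calc |(∫ τ in (0:ℝ)..Δt, (f τ - K * τ ^ p / (Nat.factorial p))) -
        Δt / (p + 1) * (f Δt - K * Δt ^ p / (Nat.factorial p))|
      ≤ |∫ τ in (0:ℝ)..Δt, (f τ - K * τ ^ p / (Nat.factorial p))| +
        |Δt / ((p:ℝ) + 1) * (f Δt - K * Δt ^ p / (Nat.factorial p))| := abs_sub _ _
    _ ≤ Ctil * Δt ^ (p + 2) / (Nat.factorial (p + 2)) +
        Δt / ((p:ℝ) + 1) * (Ctil * Δt ^ (p + 1) / (Nat.factorial (p + 1))) := add_le_add h1 h2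
    _ = (2 * p + 3) / (Nat.factorial (p + 2) * (p + 1)) * Ctil * Δt ^ (p + 2) := by
        have hfs2 : (Nat.factorial (p + 2) : ℝ) = ((p:ℝ) + 2) * (((p:ℝ) + 1) * (Nat.factorial p))
            := by rw [Nat.factorial_succ, Nat.factorial_succ]; push_cast; ring
        have hfs1 : (Nat.factorial (p + 1) : ℝ) = ((p:ℝ) + 1) * (Nat.factorial p) := by
          rw [Nat.factorial_succ]; push_cast; ring
        rw [hfs2, hfs1]
        have hpow : Δt ^ (p + 2) = Δt * Δt ^ (p + 1) := by ring
        rw [hpow]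
        field_simp
        ring
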